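/- For every real t, the first moment of the position operator in the Heisenberg evolution starting from the single excitation δ_0 satisfies: the series Σ_{k=0}^∞ (t^k / k!) · ⟨δ_0, ad^k(X) δ_0⟩ converges absolutely and its sum equals (1 + cosh(2t))/2. In particular, the expectation value of the position grows exponentially in time. -/

import Mathlib

open Complex Finsupp

/-- The position operator `X` on the space of finitely supported complex sequences:
`X δ_l = (l+1) δ_l`. -/
noncomputable def Xop : (ℕ →₀ ℂ) →ₗ[ℂ] (ℕ →₀ ℂ) :=
  Finsupp.linearCombination ℂ fun l : ℕ => ((l : ℂ) + 1) • Finsupp.single l 1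

/-- The effective single-excitation Hamiltonian `E`:
`E δ_l = i (l+1) δ_{l+1} - i l δ_{l-1}` (the second term vanishing for `l = 0`). -/
noncomputable def Eop : (ℕ →₀ ℂ) →ₗ[ℂ] (ℕ →₀ ℂ) :=
  Finsupp.linearCombination ℂ fun l : ℕ =>
    (Complex.I * ((l : ℂ) + 1)) • Finsupp.single (l + 1) 1
      - (Complex.I * (l : ℂ)) • Finsupp.single (l - 1) 1

/-- The momentum-type operator `P`:
`P δ_l = (l+1) δ_{l+1} + l δ_{l-1}` (the second term vanishing for `l = 0`). -/
noncomputable def Pop : (ℕ →₀ ℂ) →ₗ[ℂ] (ℕ →₀ ℂ) :=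
  Finsupp.linearCombination ℂ fun l : ℕ =>
    ((l : ℂ) + 1) • Finsupp.single (l + 1) 1 + (l : ℂ) • Finsupp.single (l - 1) 1


/-- The generator of Heisenberg-picture time evolution: `ad A = i (E ∘ A - A ∘ E)`. -/
noncomputable def adE :
    ((ℕ →₀ ℂ) →ₗ[ℂ] (ℕ →₀ ℂ)) → ((ℕ →₀ ℂ) →ₗ[ℂ] (ℕ →₀ ℂ)) :=
  fun A => Complex.I • (Eop ∘ₗ A - A ∘ₗ Eop)

/-- The inner product `⟨φ, ψ⟩ = Σ_l conj(φ_l) ψ_l` on finitely supported sequences. -/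
noncomputable def innerF (φ ψ : ℕ →₀ ℂ) : ℂ :=
  φ.sum fun l c => (starRingEnd ℂ) c * ψ l

lemma adE_X : adE Xop = Pop := by
  apply Finsupp.lhom_ext' ; intro l
  apply LinearMap.ext_ring
  simp only [adE, Xop, Pop, Eop, LinearMap.comp_apply, LinearMap.smul_apply,
    LinearMap.sub_apply, Finsupp.lsingle_apply, Finsupp.linearCombination_single, one_smul,
    map_sub, map_smul, smul_sub, smul_add]
  cases l with
  | zero => ext j ; simp [Finsupp.single_apply]
  | succ n =>
    ext j
    push_cast
    simp [Finsupp.single_apply]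
    split_ifs <;> push_cast <;> ring_nf <;> simp [Complex.I_sq] <;> ring_nf

lemma adE_P : adE Pop = (4:ℂ) • Xop - (2:ℂ) • LinearMap.id := by
  apply Finsupp.lhom_ext' ; intro l
  apply LinearMap.ext_ring
  simp only [adE, Xop, Pop, Eop, LinearMap.comp_apply, LinearMap.smul_apply,
    LinearMap.sub_apply, LinearMap.id_apply, Finsupp.lsingle_apply,
    Finsupp.linearCombination_single, one_smul,
    map_sub, map_add, map_smul, smul_sub, smul_add]
  match l with
  | 0 => ext j ; simp [Finsupp.single_apply] ; split_ifs <;> first | omega | (push_cast; ring_nf; try norm_num [Complex.I_sq]; try ring_nf; done)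
  | 1 => ext j ; simp [Finsupp.single_apply] ; split_ifs <;> first | omega | (push_cast; ring_nf; try norm_num [Complex.I_sq]; try ring_nf; done)
  | (n+2) =>
    ext j
    push_cast
    simp [Finsupp.single_apply]
    split_ifs <;> first | omega | (push_cast; ring_nf; try norm_num [Complex.I_sq]; try ring_nf; done)

lemma adE_smul (c : ℂ) (A : (ℕ →₀ ℂ) →ₗ[ℂ] (ℕ →₀ ℂ)) : adE (c • A) = c • adE A := by
  simp only [adE, LinearMap.comp_smul, LinearMap.smul_comp]
  module

lemma adE_id : adE (LinearMap.id : (ℕ →₀ ℂ) →ₗ[ℂ] (ℕ →₀ ℂ)) = 0 := by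
  simp only [adE, LinearMap.comp_id, LinearMap.id_comp]
  module

lemma adE_sub (A B : (ℕ →₀ ℂ) →ₗ[ℂ] (ℕ →₀ ℂ)) : adE (A - B) = adE A - adE B := by
  simp only [adE, LinearMap.comp_sub, LinearMap.sub_comp]
  module

lemma adE_Q : adE ((4:ℂ) • Xop - (2:ℂ) • LinearMap.id) = (4:ℂ) • Pop := by
  rw [adE_sub, adE_smul, adE_smul, adE_X, adE_id]
  module

lemma iter_odd (m : ℕ) : adE^[2*m+1] Xop = ((4:ℂ)^m) • Pop := by
  induction m with
  | zero => simp [adE_X]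
  | succ m ih =>
    have : 2*(m+1)+1 = (2*m+1) + 1 + 1 := by ring
    rw [this, Function.iterate_succ_apply', Function.iterate_succ_apply', ih,
      adE_smul, adE_P, adE_smul, adE_Q, smul_smul]
    rw [pow_succ]
    try ring_nf

lemma iter_even (m : ℕ) :
    adE^[2*m+2] Xop = ((4:ℂ)^m) • ((4:ℂ) • Xop - (2:ℂ) • LinearMap.id) := by
  have : 2*m+2 = (2*m+1) + 1 := by ring
  rw [this, Function.iterate_succ_apply', iter_odd, adE_smul, adE_P]

lemma innerF_d0 (ψ : ℕ →₀ ℂ) : innerF (Finsupp.single 0 1) ψ = ψ 0 := by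
  simp [innerF, Finsupp.sum_single_index]

lemma Pop_d0 : (Pop (Finsupp.single 0 1)) 0 = 0 := by
  simp [Pop, Finsupp.linearCombination_single, Finsupp.single_apply]

lemma Xop_d0 : (Xop (Finsupp.single 0 1)) 0 = 1 := by
  simp [Xop, Finsupp.linearCombination_single, Finsupp.single_apply]

noncomputable def Fc (t : ℝ) (k : ℕ) : ℂ :=
  ((2*t:ℂ)^k / (k.factorial : ℂ)) / 4 + ((-(2*t):ℂ)^k / (k.factorial : ℂ)) / 4
    + (if k = 0 then (1/2:ℂ) else 0)

lemma g_eq (t : ℝ) (k : ℕ) :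
    ((t ^ k / (k.factorial : ℝ) : ℝ) : ℂ) *
      innerF (Finsupp.single 0 1) ((adE^[k] Xop) (Finsupp.single 0 1)) = Fc t k := by
  rw [innerF_d0]
  have main : ∀ n : ℕ, k = n → (((t ^ k / (k.factorial : ℝ) : ℝ) : ℂ) *
      ((adE^[k] Xop) (Finsupp.single 0 1)) 0 = Fc t k) := by
    intro n hn
    rcases Nat.even_or_odd k with ⟨m, hm⟩ | ⟨m, hm⟩
    · match m, hm with
      | 0, hm =>
        subst hm
        simp [Fc, Xop, Finsupp.linearCombination_single, Finsupp.single_apply]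
        norm_num
      | (j+1), hm =>
        have hk : k = 2*j+2 := by omega
        subst hk
        have heven : Even (2*j+2) := ⟨j+1, by ring⟩
        rw [iter_even]
        simp only [Fc, LinearMap.smul_apply, LinearMap.sub_apply, LinearMap.id_apply,
          Finsupp.smul_apply, Finsupp.sub_apply, Xop_d0, Finsupp.single_apply,
          smul_eq_mul, if_true]
        rw [if_neg (by omega), heven.neg_pow, mul_pow]
        have h2 : (2:ℂ)^(2*j+2) = 4^j * 4 := by
          rw [show 2*j+2 = 2*(j+1) by ring, pow_mul]
          norm_num [pow_succ]
        rw [h2]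
        push_cast
        ring
    · subst hm
      rw [iter_odd]
      simp only [Fc, LinearMap.smul_apply, Finsupp.smul_apply, Pop_d0, smul_zero, mul_zero]
      rw [if_neg (by omega)]
      have hodd : Odd (2*m+1) := ⟨m, by ring⟩
      rw [hodd.neg_pow]
      ring
  exact main k rfl

lemma hasSum_Fc (t : ℝ) : HasSum (Fc t) (((1 + Real.cosh (2 * t)) / 2 : ℝ) : ℂ) := by
  have h1 := (NormedSpace.expSeries_div_hasSum_exp ((2*t : ℂ))).div_const 4
  have h2 := (NormedSpace.expSeries_div_hasSum_exp ((-(2*t) : ℂ))).div_const 4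
  have h3 : HasSum (fun k : ℕ => if k = 0 then (1/2:ℂ) else 0) (1/2) :=
    hasSum_ite_eq 0 (1/2)
  have h := (h1.add h2).add h3
  have hval : (((1 + Real.cosh (2 * t)) / 2 : ℝ) : ℂ) =
      NormedSpace.exp ((2*t : ℂ)) / 4 + NormedSpace.exp ((-(2*t) : ℂ)) / 4 + 1/2 := by
    rw [← Complex.exp_eq_exp_ℂ]
    push_cast [Real.cosh_eq]
    ring
  rw [hval]
  exact h

/-- The first moment of position in the Heisenberg evolution starting from `δ_0`:
`Σ_k (t^k/k!) ⟨δ_0, ad^k(X) δ_0⟩` converges absolutely to `(1 + cosh(2t))/2`. -/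
theorem heisenberg_first_moment (t : ℝ) :
    Summable (fun k : ℕ =>
      ‖((t ^ k / (k.factorial : ℝ) : ℝ) : ℂ) *
        innerF (Finsupp.single 0 1) ((adE^[k] Xop) (Finsupp.single 0 1))‖) ∧
    HasSum (fun k : ℕ =>
      ((t ^ k / (k.factorial : ℝ) : ℝ) : ℂ) *
        innerF (Finsupp.single 0 1) ((adE^[k] Xop) (Finsupp.single 0 1)))
      (((1 + Real.cosh (2 * t)) / 2 : ℝ) : ℂ) := by
  have hfun : (fun k : ℕ =>
      ((t ^ k / (k.factorial : ℝ) : ℝ) : ℂ) *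
        innerF (Finsupp.single 0 1) ((adE^[k] Xop) (Finsupp.single 0 1))) = Fc t :=
    funext (g_eq t)
  constructor
  · simp only [g_eq]
    exact summable_norm_iff.mpr (hasSum_Fc t).summable
  · rw [hfun]
    exact hasSum_Fc t
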